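/- Let α, k, h₀, D∞ be positive reals and ξ > 0. Define T(x,t) = -(h₀D∞√(πα)/k) · erf(ξ)/(1 + (h₀√(πα)/k)·erf(ξ)) · [1 - erf(x/(2√(αt)))/erf(ξ)] and s(t) = 2ξ√(αt). Then: (i) T satisfies the heat equation T_t(x,t) = α T_xx(x,t) for all 0 < x < s(t), t > 0; (ii) T(s(t), t) = 0 for all t > 0; (iii) k T_x(0,t) = (h₀/√t)(T(0,t) + D∞) for all t > 0. -/

import Mathlib

open Real Filter Set Topology

/-- The error function `erf x = (2/√π) ∫₀ˣ exp(-t²) dt`. -/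
noncomputable def erf (x : ℝ) : ℝ := (2 / Real.sqrt π) * ∫ t in (0:ℝ)..x, Real.exp (-t ^ 2)

lemma hasDerivAt_erf (x : ℝ) :
    HasDerivAt erf (2 / Real.sqrt π * Real.exp (-x ^ 2)) x := by
  have hcont : Continuous fun t : ℝ => Real.exp (-t ^ 2) := by continuity
  have h : HasDerivAt (fun y => ∫ t in (0:ℝ)..y, Real.exp (-t ^ 2)) (Real.exp (-x ^ 2)) x :=
    intervalIntegral.integral_hasDerivAt_right (hcont.intervalIntegrable 0 x)
      (hcont.stronglyMeasurableAtFilter _ _) hcont.continuousAt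
  exact h.const_mul (2 / Real.sqrt π)

lemma erf_pos {x : ℝ} (hx : 0 < x) : 0 < erf x := by
  unfold erf
  apply mul_pos (by positivity)
  apply intervalIntegral.intervalIntegral_pos_of_pos_on
  · exact (Continuous.intervalIntegrable (by continuity) 0 x)
  · intro t ht; positivity
  · exact hx

lemma erf_zero : erf 0 = 0 := by simp [erf]

/-- The explicit temperature of the convective mushy-zone problem satisfies the heat
equation, vanishes on the solid–mushy interface `s(t) = 2ξ√(αt)`, and satisfies the
convective boundary condition `k T_x(0,t) = (h₀/√t)(T(0,t) + D∞)` at the fixed face. -/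
theorem stmt_3 (α k h₀ Dinf ξ : ℝ) (hα : 0 < α) (hk : 0 < k) (hh : 0 < h₀)
    (hD : 0 < Dinf) (hξ : 0 < ξ)
    (T : ℝ → ℝ → ℝ) (s : ℝ → ℝ)
    (hT : ∀ x t, T x t =
      -(h₀ * Dinf * Real.sqrt (π * α) / k) *
        (erf ξ / (1 + (h₀ * Real.sqrt (π * α) / k) * erf ξ)) *
        (1 - erf (x / (2 * Real.sqrt (α * t))) / erf ξ))
    (hs : ∀ t, s t = 2 * ξ * Real.sqrt (α * t)) :
    (∀ t > (0:ℝ), ∀ x, 0 < x → x < s t →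
      deriv (fun τ => T x τ) t = α * deriv (deriv (fun y => T y t)) x) ∧
    (∀ t > (0:ℝ), T (s t) t = 0) ∧
    (∀ t > (0:ℝ), k * deriv (fun y => T y t) 0 = (h₀ / Real.sqrt t) * (T 0 t + Dinf)) := by
  have hE : 0 < erf ξ := erf_pos hξ
  set E := erf ξ with hE_def
  set A := h₀ * Real.sqrt (π * α) / k with hA_def
  set C := -(h₀ * Dinf * Real.sqrt (π * α) / k) * (E / (1 + A * E)) with hC_def
  have hsπ : (0:ℝ) < Real.sqrt π := Real.sqrt_pos.mpr Real.pi_pos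
  -- space derivative lemma, for all t > 0
  have key : ∀ t : ℝ, 0 < t → ∀ y : ℝ, HasDerivAt (fun z => T z t)
      (C * -(2 / Real.sqrt π * Real.exp (-(y / (2 * Real.sqrt (α * t))) ^ 2) *
        (1 / (2 * Real.sqrt (α * t))) / E)) y := by
    intro t ht y
    have hfx : (fun z => T z t) = fun z => C * (1 - erf (z / (2 * Real.sqrt (α * t))) / E) :=
      funext fun z => hT z t
    rw [hfx]
    have h1 : HasDerivAt (fun z : ℝ => z / (2 * Real.sqrt (α * t)))
        (1 / (2 * Real.sqrt (α * t))) y := by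
      simpa using (hasDerivAt_id y).div_const (2 * Real.sqrt (α * t))
    have h2 := (hasDerivAt_erf (y / (2 * Real.sqrt (α * t)))).comp y h1
    have h3 := ((h2.div_const E).const_sub 1).const_mul C
    convert h3 using 1
    all_goals rfl
  refine ⟨?_, ?_, ?_⟩
  · -- heat equation
    intro t ht x hx hxs
    set c := Real.sqrt (α * t) with hc_def
    have hc : 0 < c := Real.sqrt_pos.mpr (by positivity)
    -- first space derivative as a function
    have hDeq : (deriv fun y => T y t) = fun y =>
        C * -(2 / Real.sqrt π * Real.exp (-(y / (2 * c)) ^ 2) * (1 / (2 * c)) / E) :=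
      funext fun y => (key t ht y).deriv
    -- second space derivative
    have h1 : HasDerivAt (fun z : ℝ => z / (2 * c)) (1 / (2 * c)) x := by
      simpa using (hasDerivAt_id x).div_const (2 * c)
    have h2 : HasDerivAt (fun z : ℝ => -(z / (2 * c)) ^ 2)
        (-(2 * (x / (2 * c)) * (1 / (2 * c)))) x := by
      have := (h1.pow 2).neg
      convert this using 1
      · rfl
      · rfl
      · rfl
      · ring
    have h3 := h2.exp
    have hxx : HasDerivAt (fun y =>
        C * -(2 / Real.sqrt π * Real.exp (-(y / (2 * c)) ^ 2) * (1 / (2 * c)) / E))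
        (C * -(2 / Real.sqrt π *
          (Real.exp (-(x / (2 * c)) ^ 2) * -(2 * (x / (2 * c)) * (1 / (2 * c)))) *
          (1 / (2 * c)) / E)) x := by
      have h4 := (((h3.const_mul (2 / Real.sqrt π)).mul_const (1 / (2 * c))).div_const E).neg.const_mul C
      convert h4 using 1
      all_goals rfl
    -- time derivative
    have hft : (fun τ => T x τ) = fun τ => C * (1 - erf (x / (2 * Real.sqrt (α * τ))) / E) :=
      funext fun τ => hT x τ
    have hw : HasDerivAt (fun τ : ℝ => Real.sqrt (α * τ)) (1 / (2 * c) * α) t := by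
      have ha : HasDerivAt (fun τ : ℝ => α * τ) α t := by
        simpa using (hasDerivAt_id t).const_mul α
      exact (Real.hasDerivAt_sqrt (by positivity)).comp t ha
    have hu : HasDerivAt (fun τ : ℝ => x / (2 * Real.sqrt (α * τ)))
        ((0 * (2 * c) - x * (2 * (1 / (2 * c) * α))) / (2 * c) ^ 2) t := by
      exact (hasDerivAt_const t x).div (hw.const_mul 2) (by positivity)
    have hTt : HasDerivAt (fun τ => T x τ)
        (C * -(2 / Real.sqrt π * Real.exp (-(x / (2 * c)) ^ 2) *
          ((0 * (2 * c) - x * (2 * (1 / (2 * c) * α))) / (2 * c) ^ 2) / E)) t := by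
      rw [hft]
      have h5 := (hasDerivAt_erf (x / (2 * c))).comp t hu
      have h6 := ((h5.div_const E).const_sub 1).const_mul C
      convert h6 using 1
      all_goals rfl
    rw [hTt.deriv, hDeq, hxx.deriv]
    field_simp
    ring
  · -- interface condition
    intro t ht
    have hc : 0 < Real.sqrt (α * t) := Real.sqrt_pos.mpr (by positivity)
    rw [hT, hs]
    have h1 : 2 * ξ * Real.sqrt (α * t) / (2 * Real.sqrt (α * t)) = ξ := by
      field_simp
    rw [h1, ← hE_def, div_self hE.ne']
    ring
  · -- boundary condition
    intro t ht
    have hc : 0 < Real.sqrt (α * t) := Real.sqrt_pos.mpr (by positivity)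
    rw [(key t ht 0).deriv, hT]
    rw [show (0:ℝ) / (2 * Real.sqrt (α * t)) = 0 by simp, erf_zero]
    have hst : (0:ℝ) < Real.sqrt t := Real.sqrt_pos.mpr ht
    have hsa : (0:ℝ) < Real.sqrt α := Real.sqrt_pos.mpr hα
    have hpa : Real.sqrt (π * α) = Real.sqrt π * Real.sqrt α :=
      Real.sqrt_mul Real.pi_pos.le α
    have hat : Real.sqrt (α * t) = Real.sqrt α * Real.sqrt t :=
      Real.sqrt_mul hα.le t
    have hden : 0 < 1 + A * E := by
      have : 0 < A := by rw [hA_def, hpa]; positivity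
      positivity
    rw [hC_def, hA_def, hpa, hat]
    have h0 : Real.exp (-(0:ℝ) ^ 2) = 1 := by norm_num
    rw [h0]
    rw [hA_def, hpa] at hden
    field_simp
    ring
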